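/- Let q be a prime power and let a ∈ \overline{F_q} be a root of p(X) = X^{q+1} + X + 1. Then a^{q²+q+1} = 1; in particular a ∈ F_{q³} and a ≠ 0. -/
import Mathlib


theorem stmt_7 (q : ℕ) (hq : IsPrimePow q)
    (F : Type*) [Field F] [Fintype F] (hF : Fintype.card F = q)
    (a : AlgebraicClosure F) (ha : a ^ (q + 1) + a + 1 = 0) :
    a ^ (q ^ 2 + q + 1) = 1 ∧ a ^ (q ^ 3) = a ∧ a ≠ 0 := by
  set p := ringChar F with hpdef
  haveI : CharP F p := ringChar.charP F
  obtain ⟨m, hp, hcard⟩ := FiniteField.card F p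
  haveI : Fact p.Prime := ⟨hp⟩
  have hqpm : q = p ^ (m : ℕ) := hF ▸ hcard
  have hq2 : 2 ≤ q := by
    rw [hqpm]
    calc 2 ≤ p := hp.two_le
    _ ≤ p ^ (m : ℕ) := Nat.le_self_pow m.pos.ne' p
  -- apply Frobenius to ha
  have key : (a ^ q) ^ (q + 1) + a ^ q + 1 = 0 := by
    have h := congrArg (iterateFrobenius (AlgebraicClosure F) p m) ha
    simpa [map_add, map_pow, map_one, map_zero, iterateFrobenius_def, ← hqpm] using h
  have hq1 : a ^ (q + 1) = -a - 1 := by linear_combination ha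
  have hqq : a ^ (q * (q + 1)) = -(a ^ q) - 1 := by
    rw [pow_mul]; linear_combination key
  have hqa : a ^ q * a = a ^ (q + 1) := by rw [← pow_succ]
  have main : a ^ (q ^ 2 + q + 1) = 1 := by
    have h3 : q ^ 2 + q + 1 = q * (q + 1) + 1 := by ring
    rw [h3, pow_succ, hqq]
    calc (-(a ^ q) - 1) * a = -(a ^ q * a) - a := by ring
    _ = -(a ^ (q + 1)) - a := by rw [hqa]
    _ = 1 := by rw [hq1]; ring
  have hane : a ≠ 0 := by
    rintro rfl
    rw [zero_pow (Nat.succ_ne_zero q), zero_add, zero_add] at ha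
    exact one_ne_zero ha
  refine ⟨main, ?_, hane⟩
  have h3 : q ^ 3 = (q ^ 2 + q + 1) * (q - 1) + 1 := by
    obtain ⟨k, rfl⟩ := Nat.exists_eq_add_of_le hq2
    rw [show 2 + k - 1 = k + 1 from by omega]
    show (2 + k) ^ 3 = ((2 + k) ^ 2 + (2 + k) + 1) * (k + 1) + 1
    ring
  rw [h3, pow_succ, pow_mul, main, one_pow, one_mul]
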